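/- Let n ≥ 1, let f : ℝⁿ → ℝ be scaling-invariant with respect to 0 and let d ∈ ℝⁿ with d ≠ 0. If there exist real numbers 0 < a < b such that the map t ↦ f(t·d) is constant on the open interval (a, b), then t ↦ f(t·d) is constant on the whole open ray (0, ∞), i.e. f(s·d) = f(t·d) for all s, t > 0. -/

import Mathlib

/-- `f` is scaling-invariant with respect to `xstar`. -/
def ScalingInvariant {n : ℕ} (f : EuclideanSpace ℝ (Fin n) → ℝ)
    (xstar : EuclideanSpace ℝ (Fin n)) : Prop :=
  ∀ ρ : ℝ, 0 < ρ → ∀ x y : EuclideanSpace ℝ (Fin n),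
    (f (ρ • (x - xstar)) ≤ f (ρ • (y - xstar)) ↔ f (x - xstar) ≤ f (y - xstar))

/-- if `t ↦ f (t • d)` is constant on some open interval `(a, b)` with
`0 < a < b`, then it is constant on the whole open ray `(0, ∞)`. -/
theorem scalingInvariant_constant_on_ray_of_interval {n : ℕ} (hn : 1 ≤ n)
    (f : EuclideanSpace ℝ (Fin n) → ℝ) (hf : ScalingInvariant f 0)
    (d : EuclideanSpace ℝ (Fin n)) (hd : d ≠ 0)
    (a b : ℝ) (ha : 0 < a) (hab : a < b)
    (hconst : ∀ s ∈ Set.Ioo a b, ∀ t ∈ Set.Ioo a b, f (s • d) = f (t • d)) :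
    ∀ s t : ℝ, 0 < s → 0 < t → f (s • d) = f (t • d) := by
  set g : ℝ → ℝ := fun t => f (t • d) with hg
  -- key scaling equivalence
  have key : ∀ ρ : ℝ, 0 < ρ → ∀ s t : ℝ, (g (ρ * s) = g (ρ * t) ↔ g s = g t) := by
    intro ρ hρ s t
    have h1 := hf ρ hρ (s • d) (t • d)
    have h2 := hf ρ hρ (t • d) (s • d)
    simp only [sub_zero, smul_smul] at h1 h2
    constructor
    · intro h
      exact le_antisymm (h1.mp h.le) (h2.mp h.ge)
    · intro h
      exact le_antisymm (h1.mpr h.le) (h2.mpr h.ge)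
  -- constancy predicate
  set C : ℝ → ℝ → Prop := fun A B => ∀ s ∈ Set.Ioo A B, ∀ t ∈ Set.Ioo A B, g s = g t with hC
  have hCab : C a b := hconst
  -- scaling of constancy
  have scale : ∀ ρ : ℝ, 0 < ρ → ∀ A B : ℝ, C A B → C (ρ * A) (ρ * B) := by
    intro ρ hρ A B h s hs t ht
    have hs' : s / ρ ∈ Set.Ioo A B := by
      constructor
      · exact (lt_div_iff₀ hρ).mpr (by linarith [hs.1, mul_comm ρ A])
      · exact (div_lt_iff₀ hρ).mpr (by linarith [hs.2, mul_comm ρ B])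
    have ht' : t / ρ ∈ Set.Ioo A B := by
      constructor
      · exact (lt_div_iff₀ hρ).mpr (by linarith [ht.1, mul_comm ρ A])
      · exact (div_lt_iff₀ hρ).mpr (by linarith [ht.2, mul_comm ρ B])
    have := (key ρ hρ (s / ρ) (t / ρ)).mpr (h _ hs' _ ht')
    rwa [mul_div_cancel₀ _ hρ.ne', mul_div_cancel₀ _ hρ.ne'] at this
  -- gluing overlapping intervals
  have glue : ∀ A B A' B' : ℝ, A ≤ A' → A' < B → B ≤ B' → C A B → C A' B' → C A B' := by
    intro A B A' B' hAA' hA'B hBB' h1 h2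
    set m : ℝ := (A' + B) / 2 with hm
    have hm1 : m ∈ Set.Ioo A B := ⟨by simp only [hm]; linarith, by simp only [hm]; linarith⟩
    have hm2 : m ∈ Set.Ioo A' B' := ⟨by simp only [hm]; linarith, by simp only [hm]; linarith⟩
    have hgm : ∀ s ∈ Set.Ioo A B', g s = g m := by
      intro s hs
      by_cases hsB : s < B
      · exact h1 s ⟨hs.1, hsB⟩ m hm1
      · exact h2 s ⟨lt_of_lt_of_le hA'B (not_lt.mp hsB), hs.2⟩ m hm2
    intro s hs t ht
    rw [hgm s hs, hgm t ht]
  -- growing the interval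
  set ρ : ℝ := (a + b) / (2 * a) with hρdef
  have hρ1 : 1 < ρ := by
    rw [hρdef, lt_div_iff₀ (by linarith)]
    linarith
  have grow : ∀ k : ℕ, C a (b * ρ ^ k) := by
    intro k
    induction k with
    | zero => simpa using hCab
    | succ k ih =>
      have hρk : (1:ℝ) ≤ ρ ^ k := one_le_pow₀ hρ1.le
      have h2 := scale ρ (by linarith) a (b * ρ ^ k) ih
      have haρ : ρ * a = (a + b) / 2 := by
        rw [hρdef]; field_simp
      have hglue := glue a (b * ρ ^ k) (ρ * a) (ρ * (b * ρ ^ k)) ?_ ?_ ?_ ih h2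
      · have : ρ * (b * ρ ^ k) = b * ρ ^ (k + 1) := by ring
        rwa [this] at hglue
      · nlinarith [mul_pos (show (0:ℝ) < b by linarith) (show (0:ℝ) < ρ ^ k by positivity)]
      · calc ρ * a = (a + b) / 2 := haρ
          _ < b := by linarith
          _ ≤ b * ρ ^ k := by nlinarith
      · nlinarith [mul_pos (show (0:ℝ) < b by linarith) (show (0:ℝ) < ρ ^ k by positivity)]
  -- final argument
  intro s t hs ht
  set m0 : ℝ := min s t with hm0
  set M : ℝ := max s t with hM
  have hm0pos : 0 < m0 := lt_min hs ht
  have hMpos : 0 < M := lt_of_lt_of_le hm0pos (min_le_max)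
  set σ : ℝ := m0 / (2 * a) with hσ
  have hσpos : 0 < σ := div_pos hm0pos (by linarith)
  obtain ⟨k, hk⟩ := pow_unbounded_of_one_lt (M / (σ * b)) hρ1
  have hCk := scale σ hσpos a (b * ρ ^ k) (grow k)
  have hσa : σ * a = m0 / 2 := by rw [hσ]; field_simp
  have hub : M < σ * (b * ρ ^ k) := by
    have hσb : 0 < σ * b := mul_pos hσpos (by linarith)
    rw [div_lt_iff₀ hσb] at hk
    nlinarith
  have hsmem : s ∈ Set.Ioo (σ * a) (σ * (b * ρ ^ k)) := by
    constructor
    · rw [hσa]; have : m0 ≤ s := min_le_left s t; linarith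
    · exact lt_of_le_of_lt (le_max_left s t) hub
  have htmem : t ∈ Set.Ioo (σ * a) (σ * (b * ρ ^ k)) := by
    constructor
    · rw [hσa]; have : m0 ≤ t := min_le_right s t; linarith
    · exact lt_of_le_of_lt (le_max_right s t) hub
  exact hCk s hsmem t htmem
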